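/- Let (f_0, …, f_n) be a cocycle system of depth n and weight m. For 0 ≤ i ≤ n define F_i : P → ℂ by F_i(x) := x_3^{2i−m} · (det x)^{n−i} · Σ_{j=0}^{n−i} binom(n−i,j) · (x_3 x_4 / det x)^j · f_{i+j}(x_1/x_3) (this is well defined since Im(x_1·conj(x_3)) > 0 forces x_3 ≠ 0 and x_1/x_3 ∈ ℍ), and set F := F_0. Then: (i) F(z̃) = f_0(z) for all z ∈ ℍ; (ii) F(Ax) = F(x) for every A ∈ SL(2,ℤ) and x ∈ P; (iii) F(x·g) = k_2^n · k_1^{n−m} · Σ_{i=0}^{n} binom(n,i) · k_3^i · k_2^{−i} · F_i(x) for every x ∈ P and every g = [[k_1,k_3],[0,k_2]] ∈ G_0. -/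

import Mathlib

open Complex Finset


lemma triangle_sum {M : Type*} [AddCommMonoid M] (n : ℕ) (g : ℕ → ℕ → M) :
    ∑ J ∈ Finset.range (n+1), ∑ k ∈ Finset.range (n - J + 1), g J k
      = ∑ p ∈ Finset.range (n+1), ∑ J ∈ Finset.range (p+1), g J (p - J) := by
  rw [Finset.sum_sigma', Finset.sum_sigma']
  refine Finset.sum_bij' (fun x _ => ⟨x.1 + x.2, x.1⟩) (fun x _ => ⟨x.2, x.1 - x.2⟩)
    ?_ ?_ ?_ ?_ ?_
  · rintro ⟨J, k⟩ h
    simp only [Finset.mem_sigma, Finset.mem_range] at h ⊢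
    omega
  · rintro ⟨p, J⟩ h
    simp only [Finset.mem_sigma, Finset.mem_range] at h ⊢
    omega
  · rintro ⟨J, k⟩ h; simp
  · rintro ⟨p, J⟩ h
    simp only [Finset.mem_sigma, Finset.mem_range] at h
    ext <;> simp <;> omega
  · rintro ⟨J, k⟩ h; simp

lemma sumA (n : ℕ) (a b : ℂ) (F : ℕ → ℂ) :
    ∑ J ∈ Finset.range (n+1), ∑ k ∈ Finset.range (n - J + 1),
      (n.choose J : ℂ) * ((n-J).choose k : ℂ) * a^J * b^k * F (J+k)
    = ∑ p ∈ Finset.range (n+1), (n.choose p : ℂ) * (a+b)^p * F p := by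
  rw [triangle_sum]
  refine Finset.sum_congr rfl fun p hp => ?_
  have hp' : p ≤ n := Nat.lt_succ_iff.mp (Finset.mem_range.mp hp)
  rw [add_pow, Finset.mul_sum, Finset.sum_mul]
  refine Finset.sum_congr rfl fun J hJ => ?_
  have hJ' : J ≤ p := Nat.lt_succ_iff.mp (Finset.mem_range.mp hJ)
  have hnum : (n.choose J : ℂ) * ((n-J).choose (p-J) : ℂ)
      = (n.choose p : ℂ) * (p.choose J : ℂ) := by
    rw [← Nat.cast_mul, ← Nat.cast_mul, ← Nat.choose_mul (n := n) hJ']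
  rw [Nat.add_sub_cancel' hJ', hnum]
  ring

lemma im_div_pos {a b : ℂ} (h : 0 < (a * (starRingEnd ℂ) b).im) :
    b ≠ 0 ∧ 0 < (a / b).im := by
  have hb : b ≠ 0 := by rintro rfl; simp at h
  refine ⟨hb, ?_⟩
  have h2 : (a * (starRingEnd ℂ) b).im = a.im * b.re - a.re * b.im := by
    simp [Complex.mul_im]; ring
  have h3 : (a / b).im = (a.im * b.re - a.re * b.im) / Complex.normSq b := by
    rw [Complex.div_im]; ring
  rw [h3]
  exact div_pos (h2 ▸ h) (Complex.normSq_pos.mpr hb)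

lemma pow_nat_sub' {D : ℂ} (hD : D ≠ 0) {i n : ℕ} (hi : i ≤ n) :
    D ^ (n - i) = D ^ n / D ^ i := by
  rw [eq_div_iff (pow_ne_zero _ hD), ← pow_add, Nat.sub_add_cancel hi]

lemma core2 (n : ℕ) (m : ℤ) (f : ℕ → ℂ → ℂ) (u w q c D X x11 V : ℂ)
    (hq : q ≠ 0)
    (hcoc : ∀ J, J ≤ n → f J u = ∑ k ∈ Finset.range (n-J+1),
        ((n-J).choose k : ℂ) * c^k * q^(m-2*(J:ℤ)-(k:ℤ)) * f (J+k) w)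
    (hbase : V / q^2 + c / q = X * x11 / D) :
    (X*q)^(-m) * D^n * ∑ J ∈ Finset.range (n+1), (n.choose J : ℂ) * V^J * f J u
      = X^(-m) * D^n *
        ∑ p ∈ Finset.range (n+1), (n.choose p : ℂ) * (X * x11 / D)^p * f p w := by
  have e1 : ∑ J ∈ Finset.range (n+1), (n.choose J : ℂ) * V^J * f J u
      = q^m * ∑ J ∈ Finset.range (n+1), ∑ k ∈ Finset.range (n-J+1),
          (n.choose J : ℂ) * ((n-J).choose k : ℂ) * (V/q^2)^J * (c/q)^k * f (J+k) w := by
    rw [Finset.mul_sum]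
    refine Finset.sum_congr rfl fun J hJ => ?_
    rw [hcoc J (Nat.lt_succ_iff.mp (Finset.mem_range.mp hJ))]
    simp only [Finset.mul_sum]
    refine Finset.sum_congr rfl fun k _ => ?_
    have hexp : m - 2*(J:ℤ) - (k:ℤ) = m - ((2*J + k : ℕ) : ℤ) := by push_cast; ring
    rw [hexp, zpow_sub₀ hq, zpow_natCast, pow_add, pow_mul, div_pow, div_pow]
    field_simp
  have e2 : ∑ J ∈ Finset.range (n+1), ∑ k ∈ Finset.range (n-J+1),
          (n.choose J : ℂ) * ((n-J).choose k : ℂ) * (V/q^2)^J * (c/q)^k * f (J+k) w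
      = ∑ p ∈ Finset.range (n+1), (n.choose p : ℂ) * (V/q^2 + c/q)^p * f p w :=
    sumA n (V/q^2) (c/q) (fun p => f p w)
  rw [e1, e2, hbase, mul_zpow]
  have hc : q^(-m) * q^m = 1 := by
    rw [← zpow_add₀ hq]; norm_num
  generalize (∑ p ∈ Finset.range (n+1), (n.choose p : ℂ) * (X * x11 / D)^p * f p w) = S
  calc X^(-m) * q^(-m) * D^n * (q^m * S)
      = (q^(-m) * q^m) * (X^(-m) * D^n * S) := by ring
    _ = X^(-m) * D^n * S := by rw [hc, one_mul]

lemma core3 (n : ℕ) (m : ℤ) (φ : ℕ → ℂ) (D X x11 k₁ k₂ k₃ : ℂ)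
    (hX : X ≠ 0) (hD : D ≠ 0) (hk₁ : k₁ ≠ 0) (hk₂ : k₂ ≠ 0) :
    (X*k₁)^(-m) * (D*(k₁*k₂))^n * ∑ J ∈ Finset.range (n+1), (n.choose J : ℂ) *
        ((X*k₁)*(X*k₃ + x11*k₂)/(D*(k₁*k₂)))^J * φ J
      = k₂^n * k₁^((n:ℤ)-m) * ∑ i ∈ Finset.range (n+1),
          (n.choose i : ℂ) * k₃^i * k₂^(-(i:ℤ)) *
            (X^(2*(i:ℤ)-m) * D^(n-i) *
              ∑ j ∈ Finset.range (n-i+1), ((n-i).choose j : ℂ) * (X*x11/D)^j * φ (i+j)) := by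
  have hbase : (X*k₁)*(X*k₃ + x11*k₂)/(D*(k₁*k₂)) = X^2*k₃/(D*k₂) + X*x11/D := by
    field_simp
  have hL : ∑ J ∈ Finset.range (n+1), (n.choose J : ℂ) *
        ((X*k₁)*(X*k₃ + x11*k₂)/(D*(k₁*k₂)))^J * φ J
      = ∑ J ∈ Finset.range (n+1), ∑ k ∈ Finset.range (n-J+1),
          (n.choose J : ℂ) * ((n-J).choose k : ℂ) * (X^2*k₃/(D*k₂))^J * (X*x11/D)^k * φ (J+k) := by
    rw [sumA n (X^2*k₃/(D*k₂)) (X*x11/D) φ]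
    exact Finset.sum_congr rfl fun J _ => by rw [hbase]
  rw [hL]
  simp only [Finset.mul_sum]
  refine Finset.sum_congr rfl fun i hi => ?_
  refine Finset.sum_congr rfl fun j _ => ?_
  have hi' : i ≤ n := Nat.lt_succ_iff.mp (Finset.mem_range.mp hi)
  have e1 : (X*k₁ : ℂ)^(-m) = X^(-m) * k₁^(-m) := mul_zpow _ _ _
  have e2 : (k₁ : ℂ)^((n:ℤ)-m) = k₁^n * k₁^(-m) := by
    rw [sub_eq_add_neg, zpow_add₀ hk₁, zpow_natCast]
  have e3 : X^(2*(i:ℤ)-m) = X^(2*i) * X^(-m) := by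
    have h : 2*(i:ℤ)-m = ((2*i : ℕ) : ℤ) + (-m) := by push_cast; ring
    rw [h, zpow_add₀ hX, zpow_natCast]
  have e4 : (k₂:ℂ)^(-(i:ℤ)) = (k₂^i)⁻¹ := by
    rw [zpow_neg, zpow_natCast]
  have e5 : D ^ (n-i) = D^n / D^i := pow_nat_sub' hD hi'
  rw [e1, e2, e3, e4, e5]
  have hXm : X^(-m) ≠ 0 := zpow_ne_zero _ hX
  have hk₁m : k₁^(-m) ≠ 0 := zpow_ne_zero _ hk₁
  rw [div_pow, div_pow, mul_pow, mul_pow, mul_pow, ← pow_mul]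
  field_simp
  ring


/-- A cocycle system of depth `n` and weight `m`: a tuple `(f 0, …, f n)` of holomorphic
functions on the upper half plane satisfying the defining transformation rule under
`SL(2,ℤ)`. -/
def IsCocycleSystem (n : ℕ) (m : ℤ) (f : ℕ → ℂ → ℂ) : Prop :=
  (∀ i ≤ n, DifferentiableOn ℂ (f i) {z : ℂ | 0 < z.im}) ∧
  ∀ A : Matrix (Fin 2) (Fin 2) ℤ, A.det = 1 → ∀ i ≤ n, ∀ z : ℂ, 0 < z.im →
    f i (((A 0 0 : ℂ) * z + (A 0 1 : ℂ)) / ((A 1 0 : ℂ) * z + (A 1 1 : ℂ))) =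
      ∑ j ∈ Finset.range (n - i + 1),
        ((n - i).choose j : ℂ) * (A 1 0 : ℂ) ^ j *
          ((A 1 0 : ℂ) * z + (A 1 1 : ℂ)) ^ (m - 2 * (i : ℤ) - (j : ℤ)) * f (i + j) z

/-- The lift `Fᵢ` to the period domain of the `i`-th member of a cocycle system. -/
noncomputable def periodLift (n : ℕ) (m : ℤ) (f : ℕ → ℂ → ℂ) (i : ℕ)
    (x : Matrix (Fin 2) (Fin 2) ℂ) : ℂ :=
  (x 1 0) ^ (2 * (i : ℤ) - m) * x.det ^ (n - i) *
    ∑ j ∈ Finset.range (n - i + 1),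
      ((n - i).choose j : ℂ) * ((x 1 0) * (x 1 1) / x.det) ^ j * f (i + j) (x 0 0 / x 1 0)

/-- the lifts `Fᵢ` of a cocycle system to the period domain
`P = {x ∈ GL(2,ℂ) : Im(x₁ x̄₃) > 0}` satisfy: (i) `F` restricts to `f₀` on the embedded
upper half plane; (ii) `F` is `SL(2,ℤ)`-invariant; (iii) `F` transforms under the right
action of the Borel group `G₀` by the stated rule. -/
theorem periodLift_properties (n : ℕ) (m : ℤ) (f : ℕ → ℂ → ℂ)
    (hf : IsCocycleSystem n m f) :
    (∀ z : ℂ, 0 < z.im →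
      periodLift n m f 0 !![z, -1; 1, 0] = f 0 z) ∧
    (∀ A : Matrix (Fin 2) (Fin 2) ℤ, A.det = 1 →
      ∀ x : Matrix (Fin 2) (Fin 2) ℂ, x.det ≠ 0 →
        0 < (x 0 0 * (starRingEnd ℂ) (x 1 0)).im →
        periodLift n m f 0 (A.map (Int.cast : ℤ → ℂ) * x) = periodLift n m f 0 x) ∧
    (∀ x : Matrix (Fin 2) (Fin 2) ℂ, x.det ≠ 0 →
      0 < (x 0 0 * (starRingEnd ℂ) (x 1 0)).im →
      ∀ k₁ k₂ k₃ : ℂ, k₁ ≠ 0 → k₂ ≠ 0 →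
        periodLift n m f 0 (x * !![k₁, k₃; 0, k₂]) =
          k₂ ^ n * k₁ ^ ((n : ℤ) - m) *
            ∑ i ∈ Finset.range (n + 1),
              (n.choose i : ℂ) * k₃ ^ i * k₂ ^ (-(i : ℤ)) * periodLift n m f i x) := by
  refine ⟨?_, ?_, ?_⟩
  · -- (i)
    intro z hz
    have hdet : (!![z, -1; 1, 0] : Matrix (Fin 2) (Fin 2) ℂ).det = 1 := by
      simp [Matrix.det_fin_two_of]
    simp only [periodLift, hdet]
    simp only [Matrix.cons_val', Matrix.cons_val_zero, Matrix.cons_val_one, Matrix.head_cons,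
      Matrix.empty_val', Matrix.cons_val_fin_one, Matrix.head_fin_const, Nat.sub_zero,
      Nat.cast_zero, mul_zero, zero_sub, one_zpow, one_pow, one_mul, mul_one, div_one,
      zero_div, mul_zero, zero_add]
    rw [Finset.sum_eq_single 0]
    · simp
    · intro j _ hj
      simp [zero_pow hj]
    · intro h
      simp at h
  · -- (ii)
    intro A hA x hdet hP
    obtain ⟨hx10, hw⟩ := im_div_pos hP
    have hAdet : ((A 0 0 : ℂ)) * (A 1 1 : ℂ) - (A 0 1 : ℂ) * (A 1 0 : ℂ) = 1 := by
      have h := hA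
      rw [Matrix.det_fin_two] at h
      exact_mod_cast congrArg (Int.cast : ℤ → ℂ) h
    have e00 : (A.map (Int.cast : ℤ → ℂ) * x) 0 0 = (A 0 0 : ℂ) * x 0 0 + (A 0 1 : ℂ) * x 1 0 := by
      simp [Matrix.mul_apply, Fin.sum_univ_two, Matrix.map_apply]
    have e10 : (A.map (Int.cast : ℤ → ℂ) * x) 1 0 = (A 1 0 : ℂ) * x 0 0 + (A 1 1 : ℂ) * x 1 0 := by
      simp [Matrix.mul_apply, Fin.sum_univ_two, Matrix.map_apply]
    have e11 : (A.map (Int.cast : ℤ → ℂ) * x) 1 1 = (A 1 0 : ℂ) * x 0 1 + (A 1 1 : ℂ) * x 1 1 := by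
      simp [Matrix.mul_apply, Fin.sum_univ_two, Matrix.map_apply]
    have edet : (A.map (Int.cast : ℤ → ℂ) * x).det = x.det := by
      rw [Matrix.det_mul]
      have h1 : (A.map (Int.cast : ℤ → ℂ)).det = 1 := by
        rw [Matrix.det_fin_two]
        simp only [Matrix.map_apply]
        exact hAdet
      rw [h1, one_mul]
    have hq : (A 1 0 : ℂ) * (x 0 0 / x 1 0) + (A 1 1 : ℂ) ≠ 0 := by
      by_cases hc : A 1 0 = 0
      · have hd : A 1 1 ≠ 0 := by
          intro hd
          rw [Matrix.det_fin_two, hc, hd] at hA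
          simp at hA
        simp only [hc, Int.cast_zero, zero_mul, zero_add]
        exact_mod_cast hd
      · intro h0
        have him : ((A 1 0 : ℂ) * (x 0 0 / x 1 0) + (A 1 1 : ℂ)).im
            = (A 1 0 : ℝ) * (x 0 0 / x 1 0).im := by
          simp [Complex.add_im, Complex.mul_im]
        rw [h0] at him
        have hne : (A 1 0 : ℝ) * (x 0 0 / x 1 0).im ≠ 0 :=
          mul_ne_zero (by exact_mod_cast hc) (ne_of_gt hw)
        exact hne (by simpa using him.symm)
    have hy10q : (A 1 0 : ℂ) * x 0 0 + (A 1 1 : ℂ) * x 1 0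
        = x 1 0 * ((A 1 0 : ℂ) * (x 0 0 / x 1 0) + (A 1 1 : ℂ)) := by
      field_simp
    have harg : ((A 0 0 : ℂ) * x 0 0 + (A 0 1 : ℂ) * x 1 0)
          / ((A 1 0 : ℂ) * x 0 0 + (A 1 1 : ℂ) * x 1 0)
        = ((A 0 0 : ℂ) * (x 0 0 / x 1 0) + (A 0 1 : ℂ))
          / ((A 1 0 : ℂ) * (x 0 0 / x 1 0) + (A 1 1 : ℂ)) := by
      rw [hy10q, show (A 0 0 : ℂ) * x 0 0 + (A 0 1 : ℂ) * x 1 0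
          = x 1 0 * ((A 0 0 : ℂ) * (x 0 0 / x 1 0) + (A 0 1 : ℂ)) by field_simp]
      rw [mul_div_mul_left _ _ hx10]
    have hD2 : x.det = x 0 0 * x 1 1 - x 0 1 * x 1 0 := Matrix.det_fin_two x
    have hdet' : x 0 0 * x 1 1 - x 0 1 * x 1 0 ≠ 0 := hD2 ▸ hdet
    have hq2 : (A 1 0 : ℂ) * x 0 0 + (A 1 1 : ℂ) * x 1 0 ≠ 0 := by
      rw [hy10q]; exact mul_ne_zero hx10 hq
    have hbase : x 1 0 * ((A 1 0 : ℂ) * (x 0 0 / x 1 0) + (A 1 1 : ℂ))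
          * ((A 1 0 : ℂ) * x 0 1 + (A 1 1 : ℂ) * x 1 1) / x.det
          / ((A 1 0 : ℂ) * (x 0 0 / x 1 0) + (A 1 1 : ℂ))^2
        + (A 1 0 : ℂ) / ((A 1 0 : ℂ) * (x 0 0 / x 1 0) + (A 1 1 : ℂ))
        = x 1 0 * x 1 1 / x.det := by
      rw [hD2]
      field_simp [hq2, hdet', hx10]
      have h3 : x 0 0 * x 1 1 - x 1 0 * x 0 1 ≠ 0 := by
        intro h; apply hdet'; linear_combination h
      have h4 : (A 1 0 : ℂ) * x 0 0 + x 1 0 * (A 1 1 : ℂ) ≠ 0 := by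
        intro h; apply hq2; linear_combination h
      rw [div_add' _ _ _ h3, div_div, div_eq_div_iff (mul_ne_zero h3 h4) h3]
      ring
    simp only [periodLift, e00, e10, e11, edet, Nat.sub_zero, zero_add, Nat.cast_zero,
      mul_zero, zero_sub]
    rw [harg, hy10q]
    exact core2 n m f
      (((A 0 0 : ℂ) * (x 0 0 / x 1 0) + (A 0 1 : ℂ))
        / ((A 1 0 : ℂ) * (x 0 0 / x 1 0) + (A 1 1 : ℂ)))
      (x 0 0 / x 1 0)
      ((A 1 0 : ℂ) * (x 0 0 / x 1 0) + (A 1 1 : ℂ))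
      (A 1 0 : ℂ) x.det (x 1 0) (x 1 1)
      (x 1 0 * ((A 1 0 : ℂ) * (x 0 0 / x 1 0) + (A 1 1 : ℂ))
        * ((A 1 0 : ℂ) * x 0 1 + (A 1 1 : ℂ) * x 1 1) / x.det)
      hq
      (fun J hJ => hf.2 A hA J hJ (x 0 0 / x 1 0) hw)
      hbase
  · -- (iii)
    intro x hdet hP k₁ k₂ k₃ hk₁ hk₂
    obtain ⟨hx10, hw⟩ := im_div_pos hP
    have e00 : (x * !![k₁, k₃; 0, k₂]) 0 0 = x 0 0 * k₁ := by
      simp [Matrix.mul_apply, Fin.sum_univ_two]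
    have e10 : (x * !![k₁, k₃; 0, k₂]) 1 0 = x 1 0 * k₁ := by
      simp [Matrix.mul_apply, Fin.sum_univ_two]
    have e11 : (x * !![k₁, k₃; 0, k₂]) 1 1 = x 1 0 * k₃ + x 1 1 * k₂ := by
      simp [Matrix.mul_apply, Fin.sum_univ_two]
    have edet : (x * !![k₁, k₃; 0, k₂]).det = x.det * (k₁ * k₂) := by
      rw [Matrix.det_mul]
      congr 1
      simp [Matrix.det_fin_two_of]
    have harg : x 0 0 * k₁ / (x 1 0 * k₁) = x 0 0 / x 1 0 :=
      mul_div_mul_right _ _ hk₁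
    simp only [periodLift, e00, e10, e11, edet, Nat.sub_zero, zero_add, Nat.cast_zero,
      mul_zero, zero_sub, harg]
    exact core3 n m (fun p => f p (x 0 0 / x 1 0)) x.det (x 1 0) (x 1 1) k₁ k₂ k₃
      hx10 hdet hk₁ hk₂
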